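/- Let U(μ) = V(‖μ − b‖) as above with V'' > 0, V'(r) > 0 for r ≠ 0. Fix μ ≠ b and r* > 0. Over the closed ball T = {μ' : ‖μ' − b‖ ≤ r*}, the Bregman distance D_U(μ, μ') is maximized uniquely at the antipodal boundary point μ' = b + r*·(b − μ)/‖b − μ‖. -/

import Mathlib

/-- Over the closed ball of radius `r*` around `b`, the Bregman distance associated with
`U(μ) = V(‖μ − b‖)` is uniquely maximized at the antipodal boundary point
`b + r*·(b − μ)/‖b − μ‖`. -/
theorem stmt5 (N : ℕ) (hN : 1 ≤ N) (b : EuclideanSpace ℝ (Fin N)) (V : ℝ → ℝ)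
    (hV : Differentiable ℝ V) (hV' : Differentiable ℝ (deriv V))
    (hVpos : ∀ r : ℝ, r ≠ 0 → 0 < deriv V r)
    (hVpp : ∀ r : ℝ, 0 < deriv (deriv V) r)
    (μ : EuclideanSpace ℝ (Fin N)) (hμ : μ ≠ b) (rs : ℝ) (hrs : 0 < rs)
    (D : EuclideanSpace ℝ (Fin N) → ℝ)
    (hD : ∀ μ', D μ' = V ‖μ - b‖ - V ‖μ' - b‖ -
      deriv V ‖μ' - b‖ * ((inner ℝ (μ' - b) (μ - b) : ℝ) / ‖μ' - b‖ - ‖μ' - b‖)) :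
    ∀ μ', ‖μ' - b‖ ≤ rs → μ' ≠ b + (rs / ‖b - μ‖) • (b - μ) →
      D μ' < D (b + (rs / ‖b - μ‖) • (b - μ)) := by
  intro μ' hle hne
  set m := ‖μ - b‖ with hm
  have hm0 : 0 < m := by
    rw [hm, norm_sub_pos_iff]; exact hμ
  have hbm : ‖b - μ‖ = m := norm_sub_rev b μ
  set a := b + (rs / ‖b - μ‖) • (b - μ) with ha
  have hab : a - b = (rs / ‖b - μ‖) • (b - μ) := by rw [ha]; abel
  have hna : ‖a - b‖ = rs := by
    rw [hab, norm_smul, hbm, Real.norm_eq_abs, abs_div, abs_of_pos hrs, abs_of_pos hm0]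
    field_simp
  have hia : (inner ℝ (a - b) (μ - b) : ℝ) = -(rs * m) := by
    rw [hab, real_inner_smul_left, hbm]
    have h1 : b - μ = -(μ - b) := by abel
    rw [h1, inner_neg_left, real_inner_self_eq_norm_mul_norm]
    field_simp; ring
  have hDa : D a = V m - V rs + deriv V rs * (m + rs) := by
    rw [hD a, hna, hia]
    field_simp
    ring
  have hVmono : StrictMono (deriv V) := strictMono_of_deriv_pos hVpp
  have hVpos0 : ∀ r : ℝ, 0 ≤ r → 0 < deriv V r := by
    intro r hr
    rcases eq_or_lt_of_le hr with h | h
    · calc (0:ℝ) < deriv V (-1) := hVpos (-1) (by norm_num)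
        _ < deriv V r := hVmono (by linarith)
    · exact hVpos r h.ne'
  set g := fun r : ℝ => deriv V r * (m + r) - V r with hg
  have hgmono : StrictMonoOn g (Set.Ici 0) := by
    apply strictMonoOn_of_deriv_pos (convex_Ici 0)
    · exact ((hV'.continuous.mul (by fun_prop)).sub hV.continuous).continuousOn
    · intro x hx
      rw [interior_Ici] at hx
      have h1 : HasDerivAt (fun r : ℝ => deriv V r * (m + r))
          (deriv (deriv V) x * (m + x) + deriv V x * 1) x :=
        ((hV' x).hasDerivAt).mul ((hasDerivAt_id x).const_add m)
      have h2 : HasDerivAt g (deriv (deriv V) x * (m + x) + deriv V x * 1 - deriv V x) x :=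
        h1.sub (hV x).hasDerivAt
      rw [h2.deriv]
      have := hVpp x
      have hx' : (0:ℝ) < x := hx
      nlinarith
  have hDag : D a = V m + g rs := by rw [hDa, hg]; ring
  set r := ‖μ' - b‖ with hr
  have hr0 : (0:ℝ) ≤ r := norm_nonneg _
  rcases eq_or_lt_of_le hr0 with h0 | h0
  · -- μ' = b
    have hb : μ' - b = 0 := by rwa [← norm_eq_zero, ← hr, eq_comm]
    have hDb : D μ' = V m - V 0 := by
      rw [hD μ', ← hr, ← h0, hb]
      simp
    have hg0 : g 0 < g rs := hgmono (le_refl (α := ℝ) 0 : (0:ℝ) ∈ Set.Ici 0) hrs.le hrs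
    have hgz : g 0 = deriv V 0 * m - V 0 := by simp [hg]
    have hp : 0 < deriv V 0 * m := mul_pos (hVpos0 0 le_rfl) hm0
    rw [hDb, hDag]
    have : -V 0 < g rs := by rw [hgz] at hg0; linarith
    linarith
  · set c := (inner ℝ (μ' - b) (μ - b) : ℝ) with hc
    have hcs : -c ≤ r * m := by
      have h1 : (inner ℝ (μ' - b) (b - μ) : ℝ) ≤ ‖μ' - b‖ * ‖b - μ‖ := real_inner_le_norm _ _
      have h2 : b - μ = -(μ - b) := by abel
      rw [h2, inner_neg_right, norm_neg, ← hc, ← hr, ← hm] at h1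
      linarith
    have hVr : 0 < deriv V r := hVpos0 r hr0
    rcases lt_or_eq_of_le hle with hlt | heq
    · have key : D μ' ≤ V m + g r := by
        rw [hD μ', ← hr, ← hc, hg]
        have h1 : -m ≤ c / r := by rw [le_div_iff₀ h0]; linarith
        have h2 : deriv V r * (c / r - r) ≥ deriv V r * (-m - r) := by
          apply mul_le_mul_of_nonneg_left _ hVr.le
          linarith
        simp only []
        nlinarith
      have h3 : g r < g rs := hgmono hr0 hrs.le hlt
      rw [hDag]; linarith
    · -- r = rs, strict Cauchy–Schwarz
      have hstrict : (inner ℝ (μ' - b) (b - μ) : ℝ) < ‖μ' - b‖ * ‖b - μ‖ := by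
        rw [inner_lt_norm_mul_iff_real]
        intro hcontra
        apply hne
        rw [hbm, ← hr, heq] at hcontra
        have h4 : μ' - b = (rs / m) • (b - μ) := by
          have h5 : m • (μ' - b) = m • ((rs / m) • (b - μ)) := by
            rw [smul_smul, mul_div_cancel₀ _ hm0.ne', hcontra]
          exact smul_right_injective _ hm0.ne' h5
        have h6 : μ' - b = a - b := by rw [h4, hab, hbm]
        exact sub_left_injective h6
      rw [← hr, hbm] at hstrict
      have h2 : b - μ = -(μ - b) := by abel
      rw [h2, inner_neg_right, ← hc] at hstrict
      have h1 : -m < c / r := by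
        rw [lt_div_iff₀ h0]; linarith
      have h7 : deriv V r * (-m - r) < deriv V r * (c / r - r) :=
        mul_lt_mul_of_pos_left (by linarith) hVr
      have key : D μ' < V m + g r := by
        rw [hD μ', ← hr, ← hc, hg]
        simp only []
        nlinarith
      rw [hDag, ← heq]
      exact key
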